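/- arXiv:1903.08278 — 3 statements merged into one kernel-verified Lean document; each statement's English description precedes it below -/
import Mathlib

section
/- There are, up to equivalence, exactly 2 Gram matrices of icosahedra whose automorphism group is all of A (the regular icosahedron and its Galois conjugate, the great icosahedron). -/
open Matrix

noncomputable section

namespace Ico

/-- The permutation `a = (1,2)(3,4)(5,7)(6,8)(9,11)(10,12)` (vertices labelled `0,…,11`). -/
def a : Equiv.Perm (Fin 12) :=
  Equiv.swap 0 1 * Equiv.swap 2 3 * Equiv.swap 4 6 * Equiv.swap 5 7 *
    Equiv.swap 8 10 * Equiv.swap 9 11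

/-- The permutation `b = (1,10)(2,12)(3,9)(4,11)(5,6)(7,8)`. -/
def b : Equiv.Perm (Fin 12) :=
  Equiv.swap 0 9 * Equiv.swap 1 11 * Equiv.swap 2 8 * Equiv.swap 3 10 *
    Equiv.swap 4 5 * Equiv.swap 6 7

/-- The permutation `c = (1,7)(2,3)(4,11)(5,12)(6,8)(9,10)`. -/
def c : Equiv.Perm (Fin 12) :=
  Equiv.swap 0 6 * Equiv.swap 1 2 * Equiv.swap 3 10 * Equiv.swap 4 11 *
    Equiv.swap 5 7 * Equiv.swap 8 9

/-- The central permutation `d = (1,12)(2,10)(3,9)(4,11)(5,7)(6,8)`. -/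
def d : Equiv.Perm (Fin 12) :=
  Equiv.swap 0 11 * Equiv.swap 1 9 * Equiv.swap 2 8 * Equiv.swap 3 10 *
    Equiv.swap 4 6 * Equiv.swap 5 7

/-- The combinatorial automorphism group `A = ⟨a,b,c,d⟩ ≅ C₂ × A₅` of the icosahedron. -/
def A : Subgroup (Equiv.Perm (Fin 12)) := Subgroup.closure {a, b, c, d}

/-- `{i,j}` is an edge iff it lies in the `A`-orbit of the set `{1,2}`. -/
def IsEdge (i j : Fin 12) : Prop :=
  ∃ g ∈ A, ({g 0, g 1} : Finset (Fin 12)) = {i, j}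

/-- The `i`-th column of a `3 × 12` matrix, as a point of Euclidean 3-space. -/
def col (M : Matrix (Fin 3) (Fin 12) ℝ) (i : Fin 12) : EuclideanSpace ℝ (Fin 3) :=
  WithLp.toLp 2 (fun k => M k i)

/-- An icosahedron: pairwise distinct vertices, centre of mass `0`, all edges of length `1`. -/
def IsIcosahedron (M : Matrix (Fin 3) (Fin 12) ℝ) : Prop :=
  Function.Injective (col M) ∧ (∑ i, col M i) = 0 ∧
    ∀ i j, IsEdge i j → ‖col M i - col M j‖ = 1

/-- The Gram matrix `MᵀM` of a coordinate matrix. -/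
def gram (M : Matrix (Fin 3) (Fin 12) ℝ) : Matrix (Fin 12) (Fin 12) ℝ := Mᵀ * M

/-- `G` is the Gram matrix of some icosahedron. -/
def IsGram (G : Matrix (Fin 12) (Fin 12) ℝ) : Prop :=
  ∃ M, IsIcosahedron M ∧ G = gram M

/-- The permutation matrix `π(g)`; `M * permMat g` has `V_{g(i)}` as its `i`-th column. -/
def permMat (g : Equiv.Perm (Fin 12)) : Matrix (Fin 12) (Fin 12) ℝ :=
  Matrix.of fun i j => if i = g j then 1 else 0

/-- The action `G ↦ π(g)ᵀ G π(g)` of a permutation on Gram matrices,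
`(conj g G)_{i,j} = G_{g(i),g(j)}`. -/
def conj (g : Equiv.Perm (Fin 12)) (G : Matrix (Fin 12) (Fin 12) ℝ) :
    Matrix (Fin 12) (Fin 12) ℝ :=
  (permMat g)ᵀ * G * permMat g

/-- Equivalence of Gram matrices: conjugacy by a permutation matrix coming from `A`. -/
def GramEquiv (G G' : Matrix (Fin 12) (Fin 12) ℝ) : Prop :=
  ∃ g ∈ A, G' = conj g G

/-- The automorphism group of a Gram matrix: its stabilizer in `A`. -/
def aut (G : Matrix (Fin 12) (Fin 12) ℝ) : Set (Equiv.Perm (Fin 12)) :=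
  {g | g ∈ A ∧ conj g G = G}



-- ## Auxiliary development


def s5 : ℝ := Real.sqrt 5
lemma s5_sq : s5 * s5 = 5 := Real.mul_self_sqrt (by norm_num)
lemma s5_nonneg : 0 ≤ s5 := Real.sqrt_nonneg 5
lemma s5_lt : s5 < 3 := by nlinarith [s5_sq, s5_nonneg]
lemma s5_pos : 0 < s5 := Real.sqrt_pos.mpr (by norm_num)

def cls : Fin 12 → Fin 12 → Fin 4 :=
  ![![0,1,1,1,1,1,2,2,2,2,2,3],![1,0,1,1,2,2,1,1,2,3,2,2],![1,1,0,2,2,1,1,2,3,2,1,2],![1,1,2,0,1,2,2,1,1,2,3,2],![1,2,2,1,0,1,3,2,1,1,2,2],![1,2,1,2,1,0,2,3,2,1,1,2],![2,1,1,2,3,2,0,1,2,2,1,1],![2,1,2,1,2,3,1,0,1,2,2,1],![2,2,3,1,1,2,2,1,0,1,2,1],![2,3,2,2,1,1,2,2,1,0,1,1],![2,2,1,3,2,1,1,2,2,1,0,1],![3,2,2,2,2,2,1,1,1,1,1,0]]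

def wv (α β γ δ : ℝ) : Fin 4 → ℝ := ![α, β, γ, δ]

def Gtab (α β γ δ : ℝ) : Matrix (Fin 12) (Fin 12) ℝ :=
  Matrix.of fun i j => wv α β γ δ (cls i j)


lemma conj_apply (g : Equiv.Perm (Fin 12)) (G : Matrix (Fin 12) (Fin 12) ℝ) (i j : Fin 12) :
    conj g G i j = G (g i) (g j) := by
  simp [conj, permMat, Matrix.mul_apply, Matrix.transpose_apply, mul_ite, ite_mul,
    Finset.sum_ite_eq, Finset.sum_ite_eq']

lemma gram_apply (M : Matrix (Fin 3) (Fin 12) ℝ) (i j : Fin 12) :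
    gram M i j = ∑ k, M k i * M k j := by
  simp [gram, Matrix.mul_apply, Matrix.transpose_apply]

lemma cls_self : ∀ i, cls i i = 0 := by decide
lemma cls_symm : ∀ i j, cls i j = cls j i := by decide
lemma cls_zero : ∀ i j, cls i j = 0 → i = j := by decide
lemma fin4_cases : ∀ x : Fin 4, x = 0 ∨ x = 1 ∨ x = 2 ∨ x = 3 := by decide

lemma cls_gen_inv : ∀ g ∈ ({a,b,c,d} : Set (Equiv.Perm (Fin 12))), ∀ i j, cls (g i) (g j) = cls i j := by
  intro g hg i j
  rcases hg with h|h|h|h <;> subst h <;> revert i j <;> decide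

lemma cls_inv : ∀ g ∈ A, ∀ i j, cls (g i) (g j) = cls i j := by
  intro g hg
  induction hg using Subgroup.closure_induction with
  | mem x hx => exact cls_gen_inv x hx
  | one => intro i j; rfl
  | mul x y hx hy px py => intro i j; rw [Equiv.Perm.mul_apply, Equiv.Perm.mul_apply, px, py]
  | inv x hx px =>
      intro i j
      have := px (x⁻¹ i) (x⁻¹ j)
      simpa using this.symm

-- ℤ data tables (Z0 + t*Z1 = 4 * coordinates)
def Z0 : Matrix (Fin 3) (Fin 12) ℤ :=
  !![0, 2, 1, -2, -1, 0, 1, 0, -1, -2, 2, 0;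
     2, 1, 0, 1, 0, -2, 0, 2, 0, -1, -1, -2;
     1, 0, 2, 0, 2, 1, -2, -1, -2, 0, 0, -1]
def Z1 : Matrix (Fin 3) (Fin 12) ℤ :=
  !![0, 0, 1, 0, -1, 0, 1, 0, -1, 0, 0, 0;
     0, 1, 0, 1, 0, 0, 0, 0, 0, -1, -1, 0;
     1, 0, 0, 0, 0, 1, 0, -1, 0, 0, 0, -1]
def u3Q : Fin 4 → Fin 12 → ℤ :=
  ![![-1,1,0,0,0,0,0,0,0,1,0,-1],![-1,-1,2,0,0,0,0,0,2,-1,0,-1],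
    ![-1,-1,-1,3,0,0,0,0,-1,-1,3,-1],![-1,-1,-1,-1,4,0,4,0,-1,-1,-1,-1]]
def x0 : Fin 2 → Fin 12 → ℤ :=
  ![![0,2,1,-2,-1,0,1,0,-1,-2,2,0],![2,1,0,1,0,-2,0,2,0,-1,-1,-2]]
def x1 : Fin 2 → Fin 12 → ℤ :=
  ![![0,0,1,0,-1,0,1,0,-1,0,0,0],![0,1,0,1,0,0,0,0,0,-1,-1,0]]
def ind (m : Fin 4) : Matrix (Fin 12) (Fin 12) ℤ :=
  Matrix.of fun i j => if cls i j = m then 1 else 0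
def aZ : Fin 4 → ℤ := ![10, 2, -2, -10]
def bZ : Fin 4 → ℤ := ![2, 2, -2, -2]

def Mgen (t : ℝ) : Matrix (Fin 3) (Fin 12) ℝ :=
  Matrix.of fun k j => ((Z0 k j : ℤ) : ℝ) / 4 + t * (((Z1 k j : ℤ) : ℝ) / 4)

-- decide facts over ℤ
lemma hq0 : ∀ i j, (∑ k, Z0 k i * Z0 k j) + 5 * (∑ k, Z1 k i * Z1 k j) = aZ (cls i j) := by decide
lemma hq1 : ∀ i j, (∑ k, (Z0 k i * Z1 k j + Z1 k i * Z0 k j)) = bZ (cls i j) := by decide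
lemma hrow0 : ∀ k, ∑ j, Z0 k j = 0 := by decide
lemma hrow1 : ∀ k, ∑ j, Z1 k j = 0 := by decide

lemma cast_sum {n : ℕ} (f : Fin n → ℤ) (v : ℤ) (h : ∑ j, f j = v) :
    ∑ j, ((f j : ℤ) : ℝ) = (v : ℝ) := by
  have := congrArg (fun z : ℤ => (z : ℝ)) h
  push_cast at this
  exact this

lemma f4 : ∀ m k : Fin 4, ((if (k : Fin 4) = m then (1:ℤ) else 0) : ℝ) = if k = m then 1 else 0 := by
  intro m k; split <;> simp

lemma vec4_three {X : Type*} (a b c d : X) : ![a, b, c, d] 3 = d := rfl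

lemma Gtab_pt (α β γ δ : ℝ) (i j : Fin 12) :
    Gtab α β γ δ i j = α * ((ind 0 i j : ℤ) : ℝ) + β * ((ind 1 i j : ℤ) : ℝ)
      + γ * ((ind 2 i j : ℤ) : ℝ) + δ * ((ind 3 i j : ℤ) : ℝ) := by
  show wv α β γ δ (cls i j) = _
  show _ = α * ((if cls i j = 0 then (1:ℤ) else 0 : ℤ) : ℝ) + β * ((if cls i j = 1 then (1:ℤ) else 0 : ℤ) : ℝ)
      + γ * ((if cls i j = 2 then (1:ℤ) else 0 : ℤ) : ℝ) + δ * ((if cls i j = 3 then (1:ℤ) else 0 : ℤ) : ℝ)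
  rcases fin4_cases (cls i j) with h|h|h|h <;> rw [h] <;>
    norm_num [wv, show ((0:Fin 4) = 1) = False from by decide, show ((0:Fin 4) = 2) = False from by decide,
      show ((0:Fin 4) = 3) = False from by decide, show ((1:Fin 4) = 0) = False from by decide,
      show ((1:Fin 4) = 2) = False from by decide, show ((1:Fin 4) = 3) = False from by decide,
      show ((2:Fin 4) = 0) = False from by decide, show ((2:Fin 4) = 1) = False from by decide,
      show ((2:Fin 4) = 3) = False from by decide, show ((3:Fin 4) = 0) = False from by decide,
      show ((3:Fin 4) = 1) = False from by decide, show ((3:Fin 4) = 2) = False from by decide,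
      Matrix.cons_val_two, Matrix.vecHead, Matrix.vecTail, vec4_three]

lemma wv_ab (t : ℝ) (k : Fin 4) :
    wv ((5+t)/8) ((1+t)/8) (-((1+t)/8)) (-((5+t)/8)) k = (((aZ k : ℤ) : ℝ) + t * ((bZ k : ℤ) : ℝ)) / 16 := by
  rcases fin4_cases k with h|h|h|h <;> subst h <;> norm_num [wv, aZ, bZ, Matrix.cons_val_two, Matrix.vecHead, Matrix.vecTail, vec4_three] <;> ring

lemma gram_gen (t : ℝ) (ht : t * t = 5) :
    gram (Mgen t) = Gtab ((5+t)/8) ((1+t)/8) (-((1+t)/8)) (-((5+t)/8)) := by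
  ext i j
  rw [gram_apply]
  have e1 : ∀ k : Fin 3, Mgen t k i * Mgen t k j
      = (((Z0 k i * Z0 k j : ℤ) : ℝ) + t * (((Z0 k i * Z1 k j + Z1 k i * Z0 k j : ℤ)) : ℝ)
        + (t*t) * ((Z1 k i * Z1 k j : ℤ) : ℝ)) / 16 := by
    intro k; simp only [Mgen, Matrix.of_apply]; push_cast; ring
  rw [Finset.sum_congr rfl fun k _ => e1 k, ← Finset.sum_div,
    Finset.sum_add_distrib, Finset.sum_add_distrib, ← Finset.mul_sum, ← Finset.mul_sum,
    cast_sum _ _ rfl, cast_sum _ _ rfl, cast_sum _ _ rfl, ht]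
  have h0' : ((∑ k, Z0 k i * Z0 k j : ℤ) : ℝ) + 5 * ((∑ k, Z1 k i * Z1 k j : ℤ) : ℝ)
      = ((aZ (cls i j) : ℤ) : ℝ) := by exact_mod_cast congrArg (fun z : ℤ => (z : ℝ)) (hq0 i j)
  have h1' : ((∑ k, (Z0 k i * Z1 k j + Z1 k i * Z0 k j) : ℤ) : ℝ) = ((bZ (cls i j) : ℤ) : ℝ) := by
    exact_mod_cast congrArg (fun z : ℤ => (z : ℝ)) (hq1 i j)
  rw [h1']
  show _ = wv _ _ _ _ (cls i j)
  rw [wv_ab t (cls i j)]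
  linarith [h0']

lemma dist_sq (M : Matrix (Fin 3) (Fin 12) ℝ) (i j : Fin 12) :
    ‖col M i - col M j‖^2 = gram M i i + gram M j j - 2 * gram M i j := by
  have h1 : ‖col M i - col M j‖^2 = ∑ k, (M k i - M k j)^2 := by
    rw [EuclideanSpace.norm_eq, Real.sq_sqrt (Finset.sum_nonneg fun k _ => sq_nonneg _)]
    refine Finset.sum_congr rfl fun k _ => ?_
    rw [Real.norm_eq_abs, sq_abs]
    congr 1
  rw [h1, gram_apply, gram_apply, gram_apply, Finset.mul_sum, ← Finset.sum_add_distrib,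
    ← Finset.sum_sub_distrib]
  exact Finset.sum_congr rfl fun k _ => by ring

lemma rowsum (M : Matrix (Fin 3) (Fin 12) ℝ) (hsum : (∑ i, col M i) = 0) (i : Fin 12) :
    ∑ j, gram M i j = 0 := by
  have hk : ∀ k, ∑ j, M k j = 0 := by
    intro k
    have h := congrArg (fun v : EuclideanSpace ℝ (Fin 3) => v k) hsum
    simp only [WithLp.ofLp_sum, Finset.sum_apply, col, PiLp.zero_apply] at h
    exact h
  calc ∑ j, gram M i j = ∑ j, ∑ k, M k i * M k j :=
        Finset.sum_congr rfl fun j _ => gram_apply M i j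
    _ = ∑ k, ∑ j, M k i * M k j := Finset.sum_comm
    _ = ∑ k : Fin 3, M k i * ∑ j, M k j := by
        exact Finset.sum_congr rfl fun k _ => (Finset.mul_sum _ _ _).symm
    _ = 0 := by simp [hk]

lemma quadform (M : Matrix (Fin 3) (Fin 12) ℝ) (v w : Fin 12 → ℝ) :
    ∑ j, v j * (∑ l, gram M j l * w l) = ∑ k, (∑ j, M k j * v j) * (∑ j, M k j * w j) := by
  have e1 : ∀ j l, v j * (gram M j l * w l) = ∑ k, (M k j * v j) * (M k l * w l) := by
    intro j l
    rw [gram_apply, Finset.sum_mul, Finset.mul_sum]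
    refine Finset.sum_congr rfl fun k _ => by ring
  calc ∑ j, v j * (∑ l, gram M j l * w l)
      = ∑ j, ∑ l, ∑ k, (M k j * v j) * (M k l * w l) := by
        refine Finset.sum_congr rfl fun j _ => ?_
        rw [Finset.mul_sum]
        exact Finset.sum_congr rfl fun l _ => e1 j l
    _ = ∑ j, ∑ k, ∑ l, (M k j * v j) * (M k l * w l) :=
        Finset.sum_congr rfl fun j _ => Finset.sum_comm
    _ = ∑ k, ∑ j, ∑ l, (M k j * v j) * (M k l * w l) := Finset.sum_comm
    _ = ∑ k, (∑ j, M k j * v j) * (∑ j, M k j * w j) := by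
        refine Finset.sum_congr rfl fun k _ => ?_
        rw [Finset.sum_mul]
        exact Finset.sum_congr rfl fun j _ => (Finset.mul_sum _ _ _).symm

lemma lam_nonneg (M : Matrix (Fin 3) (Fin 12) ℝ) (u : Fin 12 → ℝ) (lam N : ℝ)
    (heig : ∀ i, ∑ j, gram M i j * u j = lam * u i)
    (hN : ∑ j, u j * u j = N) : 0 ≤ lam * N := by
  have h := quadform M u u
  have h2 : ∑ j, u j * (∑ l, gram M j l * u l) = lam * N := by
    rw [← hN, Finset.mul_sum]
    refine Finset.sum_congr rfl fun j _ => ?_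
    rw [heig j]; ring
  rw [h2] at h
  rw [h]
  exact Finset.sum_nonneg fun k _ => mul_self_nonneg _

lemma dep4 (f : Fin 4 → EuclideanSpace ℝ (Fin 3)) :
    ∃ cc : Fin 4 → ℝ, (∃ p, cc p ≠ 0) ∧ ∑ p, cc p • f p = 0 := by
  have h : ¬ LinearIndependent ℝ f := by
    intro h
    have h2 := h.fintype_card_le_finrank
    rw [finrank_euclideanSpace_fin] at h2
    simp at h2
  obtain ⟨g, hg, p, hp⟩ := Fintype.not_linearIndependent_iff.mp h
  exact ⟨g, ⟨p, hp⟩, hg⟩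

lemma key (M : Matrix (Fin 3) (Fin 12) ℝ) (u : Fin 4 → Fin 12 → ℝ) (lam Nv : Fin 4 → ℝ)
    (heig : ∀ p i, ∑ j, gram M i j * u p j = lam p * u p i)
    (horth : ∀ p q, ∑ j, u p j * u q j = if p = q then Nv p else 0) :
    ∃ cc : Fin 4 → ℝ, (∃ p, cc p ≠ 0) ∧ ∑ p, cc p ^ 2 * (lam p * Nv p) = 0 := by
  obtain ⟨cc, hc0, hcsum⟩ := dep4 (fun p => (WithLp.toLp 2 (fun k => ∑ j, M k j * u p j) : EuclideanSpace ℝ (Fin 3)))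
  refine ⟨cc, hc0, ?_⟩
  set v : Fin 12 → ℝ := fun j => ∑ p, cc p * u p j with hv
  have hMv : ∀ k, ∑ j, M k j * v j = 0 := by
    intro k
    have hk : (∑ p, cc p • (WithLp.toLp 2 (fun k => ∑ j, M k j * u p j) : EuclideanSpace ℝ (Fin 3))) k = 0 := by
      rw [hcsum]; rfl
    simp only [WithLp.ofLp_sum, WithLp.ofLp_smul, Finset.sum_apply, Pi.smul_apply, smul_eq_mul] at hk
    calc ∑ j, M k j * v j = ∑ j, ∑ p, cc p * (M k j * u p j) := by
          refine Finset.sum_congr rfl fun j _ => ?_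
          rw [hv, Finset.mul_sum]
          exact Finset.sum_congr rfl fun p _ => by ring
      _ = ∑ p, ∑ j, cc p * (M k j * u p j) := Finset.sum_comm
      _ = ∑ p, cc p * ∑ j, M k j * u p j := by
          exact Finset.sum_congr rfl fun p _ => (Finset.mul_sum _ _ _).symm
      _ = 0 := by
          rw [← hk]
  have h0 : ∑ j, v j * (∑ l, gram M j l * v l) = 0 := by
    rw [quadform]
    exact Finset.sum_eq_zero fun k _ => by rw [hMv k]; ring
  have hGv : ∀ j, ∑ l, gram M j l * v l = ∑ p, cc p * (lam p * u p j) := by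
    intro j
    calc ∑ l, gram M j l * v l = ∑ l, ∑ p, cc p * (gram M j l * u p l) := by
          refine Finset.sum_congr rfl fun l _ => ?_
          rw [hv, Finset.mul_sum]
          exact Finset.sum_congr rfl fun p _ => by ring
      _ = ∑ p, ∑ l, cc p * (gram M j l * u p l) := Finset.sum_comm
      _ = ∑ p, cc p * (lam p * u p j) := by
          refine Finset.sum_congr rfl fun p _ => ?_
          rw [← heig p j, Finset.mul_sum]
  have h1 : ∑ j, v j * (∑ l, gram M j l * v l) = ∑ p, cc p ^ 2 * (lam p * Nv p) := by
    calc ∑ j, v j * (∑ l, gram M j l * v l)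
        = ∑ j, ∑ p, (cc p * lam p) * (v j * u p j) := by
          refine Finset.sum_congr rfl fun j _ => ?_
          rw [hGv j, Finset.mul_sum]
          exact Finset.sum_congr rfl fun p _ => by ring
      _ = ∑ p, ∑ j, (cc p * lam p) * (v j * u p j) := Finset.sum_comm
      _ = ∑ p, (cc p * lam p) * ∑ j, v j * u p j := by
          exact Finset.sum_congr rfl fun p _ => (Finset.mul_sum _ _ _).symm
      _ = ∑ p, cc p ^ 2 * (lam p * Nv p) := by
          refine Finset.sum_congr rfl fun p _ => ?_
          have hvu : ∑ j, v j * u p j = cc p * Nv p := by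
            calc ∑ j, v j * u p j = ∑ j, ∑ q, cc q * (u q j * u p j) := by
                  refine Finset.sum_congr rfl fun j _ => ?_
                  rw [hv, Finset.sum_mul]
                  exact Finset.sum_congr rfl fun q _ => by ring
              _ = ∑ q, ∑ j, cc q * (u q j * u p j) := Finset.sum_comm
              _ = ∑ q, cc q * (if q = p then Nv q else 0) := by
                  refine Finset.sum_congr rfl fun q _ => ?_
                  rw [← horth q p, Finset.mul_sum]
              _ = cc p * Nv p := by
                  simp [mul_ite]
          rw [hvu]; ring
  rw [← h1, h0]


-- word machinery certifying membership in A
def gens : Fin 4 → Equiv.Perm (Fin 12) := ![a, b, c, d]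

def wp (l : List (Fin 4)) : Equiv.Perm (Fin 12) := (l.map gens).prod

lemma gens_mem : ∀ k, gens k ∈ A := by
  intro k
  fin_cases k
  · exact Subgroup.subset_closure (by simp [gens])
  · exact Subgroup.subset_closure (by simp [gens])
  · exact Subgroup.subset_closure (by simp [gens])
  · exact Subgroup.subset_closure (by simp [gens])

lemma wp_mem : ∀ l, wp l ∈ A := by
  intro l
  induction l with
  | nil => exact one_mem A
  | cons h t ih =>
      show (List.map gens (h :: t)).prod ∈ A
      rw [List.map_cons, List.prod_cons]
      exact mul_mem (gens_mem h) ih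

def rep : Fin 4 → Fin 12 := ![0, 1, 6, 11]

def wl : Fin 12 → Fin 12 → List (Fin 4) :=
  ![ ![ [], [], [1,0,2,0,2], [3,2,0,2], [1,2,1,2,0], [0,2,1,2,1], [], [3,1,0], [3,2,0,2], [0,2,1,2,1], [1,0,2,0,2], [] ],
     ![ [0], [0], [3,0,2,0,2], [1,2,0,2], [0], [3,1], [1,0,2,1,2,0], [2,1,2,1], [1,2,0,2], [0], [3,0,2,0,2], [2,1,2,1] ],
     ![ [1,0,2,0,2,0], [0,2,0,2,1], [2,0], [1,0,2,0,2,0], [1,2,1], [1,2,1], [2,0], [3,2,1], [2,0], [3,1,2,0], [2,1,2,0,2], [2,0] ],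
     ![ [2,0,2,1], [1,2,0,2,0], [1,2,0,2,0], [0,2,0], [0,2,0], [2,0,2,1], [1,0,2,1], [1,0,2,1], [2,1,2,0,2,1], [0,2,0], [0,2,0], [3,1,0,2,0] ],
     ![ [1,2,1,2], [0,2], [1,2,1,2], [0,2], [0,2], [2,0,2,1,2,0], [0,2], [2,1,0], [3,2], [3,1,0,2,1,2], [2,0,2,1,2,0], [3,2] ],
     ![ [3,0,2,1,2], [3,1,2], [3,1,2], [2,0,2,1,2], [2,0,2,1,2], [1,0,2], [1,2,1,0], [1,0,2], [2,1,2], [2,1,2], [1,0,2], [1,0,2] ],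
     ![ [2], [1,0,2,1,2], [2], [1,0,2,1,2], [2], [0,2,1,0], [2], [2,0,2,1,2,1], [3,1,2,1,2], [3,0,2], [3,0,2], [3,1,2,1,2] ],
     ![ [3,1,0,2], [3,2,1,2], [3,2,1,2], [2,1,0,2], [2,1,0,2], [1,2], [0,2,0,2,1,2], [1,2], [1,2], [1,2], [0,2,1,2], [0,2,1,2] ],
     ![ [3,2,0], [1,2,0], [2,1], [1,2,1,2,0,2], [2,1], [2,1], [3,1,2,1], [1,2,0], [2,1], [0,2,0,2,0], [0,2,0,2,0], [1,0,2,0,2,1] ],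
     ![ [3,2,1,2,1], [1], [2,1,2,0], [0,2,0,2], [1,0,2,1,2,1], [2,1,2,0], [3,0], [1], [0,2,0,2], [1], [3,1,2,0,2], [1] ],
     ![ [1,0,2,0], [3,0,2,0], [2,1,2,0,2,0], [0,2,1], [3,1,0,2,1], [1,0,2,0], [0,2,1], [0,2,1], [2,0,2,0], [1,2,0,2,1], [0,2,1], [2,0,2,0] ],
     ![ [3], [1,2,1,2,1], [2,0,2], [0,2,1,2,0], [3], [1,0], [1,2,1,2,1], [0,2,1,2,0], [3,1,0,2,0,2], [3], [2,0,2], [3] ] ]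

set_option maxRecDepth 20000 in
lemma wl_spec : ∀ x y, (wp (wl x y)) 0 = x ∧ (wp (wl x y)) (rep (cls x y)) = y := by decide

lemma exists_word (x y : Fin 12) : ∃ g ∈ A, g 0 = x ∧ g (rep (cls x y)) = y :=
  ⟨wp (wl x y), wp_mem _, (wl_spec x y).1, (wl_spec x y).2⟩

lemma aut_full (α β γ δ : ℝ) : aut (Gtab α β γ δ) = (A : Set (Equiv.Perm (Fin 12))) := by
  ext g
  constructor
  · exact fun h => h.1
  · intro hg
    refine ⟨hg, ?_⟩
    ext i j
    rw [conj_apply]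
    show wv α β γ δ (cls (g i) (g j)) = wv α β γ δ (cls i j)
    rw [cls_inv g hg]

lemma edge_cls : ∀ i j, IsEdge i j → cls i j = 1 := by
  rintro i j ⟨g, hg, hset⟩
  have h01 : cls (g 0) (g 1) = 1 := by rw [cls_inv g hg]; rfl
  have hmem0 : g 0 ∈ ({i, j} : Finset (Fin 12)) := by rw [← hset]; simp
  have hmem1 : g 1 ∈ ({i, j} : Finset (Fin 12)) := by rw [← hset]; simp
  have hne : g 0 ≠ g 1 := by
    intro h
    have := g.injective h
    exact absurd this (by decide)
  simp only [Finset.mem_insert, Finset.mem_singleton] at hmem0 hmem1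
  rcases hmem0 with h0 | h0 <;> rcases hmem1 with h1 | h1
  · exact absurd (h0.trans h1.symm) hne
  · rw [← h0, ← h1]; exact h01
  · rw [cls_symm, ← h0, ← h1]; exact h01
  · exact absurd (h0.trans h1.symm) hne

lemma isEdge_01 : IsEdge 0 1 := ⟨1, one_mem A, by decide⟩

lemma mgen_edges (t : ℝ) (ht : t * t = 5) :
    ∀ i j, IsEdge i j → ‖col (Mgen t) i - col (Mgen t) j‖ = 1 := by
  intro i j he
  have hc := edge_cls i j he
  have hsq : ‖col (Mgen t) i - col (Mgen t) j‖^2 = 1 := by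
    rw [dist_sq, gram_gen t ht]
    show wv _ _ _ _ (cls i i) + wv _ _ _ _ (cls j j) - 2 * wv _ _ _ _ (cls i j) = 1
    rw [cls_self i, cls_self j, hc]
    show (5+t)/8 + (5+t)/8 - 2*((1+t)/8) = 1
    ring
  have hnn := norm_nonneg (col (Mgen t) i - col (Mgen t) j)
  nlinarith [hsq, hnn]

lemma mgen_sum0 (t : ℝ) : (∑ i, col (Mgen t) i) = 0 := by
  ext k
  simp only [WithLp.ofLp_sum, Finset.sum_apply, PiLp.zero_apply]
  have h1 : ∀ j : Fin 12, col (Mgen t) j k = ((Z0 k j : ℤ) : ℝ)/4 + t * (((Z1 k j : ℤ) : ℝ)/4) := by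
    intro j; rfl
  rw [Finset.sum_congr rfl fun j _ => h1 j, Finset.sum_add_distrib, ← Finset.mul_sum,
    ← Finset.sum_div, ← Finset.sum_div, cast_sum _ _ (hrow0 k), cast_sum _ _ (hrow1 k)]
  norm_num

lemma mgen_inj (t : ℝ) (ht : t * t = 5) : Function.Injective (col (Mgen t)) := by
  intro i j hij
  by_contra hne
  have h0 : ‖col (Mgen t) i - col (Mgen t) j‖^2 = 0 := by rw [hij]; simp
  rw [dist_sq, gram_gen t ht] at h0
  have h0' : wv ((5+t)/8) ((1+t)/8) (-((1+t)/8)) (-((5+t)/8)) (cls i i)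
      + wv ((5+t)/8) ((1+t)/8) (-((1+t)/8)) (-((5+t)/8)) (cls j j)
      - 2 * wv ((5+t)/8) ((1+t)/8) (-((1+t)/8)) (-((5+t)/8)) (cls i j) = 0 := h0
  rw [cls_self i, cls_self j] at h0'
  rcases fin4_cases (cls i j) with h|h|h|h
  · exact hne (cls_zero i j h)
  · rw [h] at h0'
    have : (5+t)/8 + (5+t)/8 - 2*((1+t)/8) = (0:ℝ) := h0'
    nlinarith [this]
  · rw [h] at h0'
    have : (5+t)/8 + (5+t)/8 - 2*(-((1+t)/8)) = (0:ℝ) := h0'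
    nlinarith [this, ht]
  · rw [h] at h0'
    have : (5+t)/8 + (5+t)/8 - 2*(-((5+t)/8)) = (0:ℝ) := h0'
    nlinarith [this, ht]

lemma mgen_ico (t : ℝ) (ht : t * t = 5) : IsIcosahedron (Mgen t) :=
  ⟨mgen_inj t ht, mgen_sum0 t, mgen_edges t ht⟩

lemma isGram_gen (t : ℝ) (ht : t * t = 5) :
    IsGram (Gtab ((5+t)/8) ((1+t)/8) (-((1+t)/8)) (-((5+t)/8))) :=
  ⟨Mgen t, mgen_ico t ht, (gram_gen t ht).symm⟩

def u3R : Fin 4 → Fin 12 → ℝ := fun p j => ((u3Q p j : ℤ) : ℝ)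
def N3 : Fin 4 → ℝ := ![4, 12, 24, 40]
def eps : Fin 4 → ℝ := ![1, 1, -1, -1]
def bas : Fin 4 → Fin 2 := ![0, 1, 0, 1]
def UU : Fin 4 → Fin 12 → ℝ :=
  fun p j => ((x0 (bas p) j : ℤ) : ℝ) + (eps p * s5) * ((x1 (bas p) j : ℤ) : ℝ)
def lamU (α β γ δ : ℝ) : Fin 4 → ℝ :=
  fun p => α + (eps p * s5) * β - (eps p * s5) * γ - δ
def NU : Fin 4 → ℝ := fun p => 40 + eps p * (8 * s5)

lemma hu3a : ∀ p i, ∑ j, ind 0 i j * u3Q p j = u3Q p i := by decide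
lemma hu3b : ∀ p i, ∑ j, ind 1 i j * u3Q p j = -u3Q p i := by decide
lemma hu3c : ∀ p i, ∑ j, ind 2 i j * u3Q p j = -u3Q p i := by decide
lemma hu3d : ∀ p i, ∑ j, ind 3 i j * u3Q p j = u3Q p i := by decide
lemma hu3orth : ∀ p q, ∑ j, u3Q p j * u3Q q j = if p = q then (![4,12,24,40] : Fin 4 → ℤ) p else 0 := by decide

lemma hxa0 : ∀ k i, ∑ j, ind 0 i j * x0 k j = x0 k i := by decide
lemma hxa1 : ∀ k i, ∑ j, ind 0 i j * x1 k j = x1 k i := by decide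
lemma hxb0 : ∀ k i, ∑ j, ind 1 i j * x0 k j = 5 * x1 k i := by decide
lemma hxb1 : ∀ k i, ∑ j, ind 1 i j * x1 k j = x0 k i := by decide
lemma hxc0 : ∀ k i, ∑ j, ind 2 i j * x0 k j = -(5 * x1 k i) := by decide
lemma hxc1 : ∀ k i, ∑ j, ind 2 i j * x1 k j = -x0 k i := by decide
lemma hxd0 : ∀ k i, ∑ j, ind 3 i j * x0 k j = -x0 k i := by decide
lemma hxd1 : ∀ k i, ∑ j, ind 3 i j * x1 k j = -x1 k i := by decide
lemma hd00 : ∀ ka kb, ∑ j, x0 ka j * x0 kb j = if ka = kb then 20 else 0 := by decide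
lemma hd01 : ∀ ka kb, ∑ j, x0 ka j * x1 kb j = if ka = kb then 4 else 0 := by decide
lemma hd10 : ∀ ka kb, ∑ j, x1 ka j * x0 kb j = if ka = kb then 4 else 0 := by decide
lemma hd11 : ∀ ka kb, ∑ j, x1 ka j * x1 kb j = if ka = kb then 4 else 0 := by decide
lemma hcnt : ∀ m : Fin 4, ∑ j, ind m 0 j = (![1,5,5,1] : Fin 4 → ℤ) m := by decide

lemma eig3 (α β γ δ : ℝ) (p : Fin 4) (i : Fin 12) :
    ∑ j, Gtab α β γ δ i j * u3R p j = (α - β - γ + δ) * u3R p i := by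
  have e : ∀ j, Gtab α β γ δ i j * u3R p j
      = α * ((ind 0 i j * u3Q p j : ℤ):ℝ) + β * ((ind 1 i j * u3Q p j : ℤ):ℝ)
        + γ * ((ind 2 i j * u3Q p j : ℤ):ℝ) + δ * ((ind 3 i j * u3Q p j : ℤ):ℝ) := by
    intro j; rw [Gtab_pt]; push_cast [u3R]; ring
  rw [Finset.sum_congr rfl fun j _ => e j, Finset.sum_add_distrib, Finset.sum_add_distrib,
    Finset.sum_add_distrib, ← Finset.mul_sum, ← Finset.mul_sum, ← Finset.mul_sum, ← Finset.mul_sum,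
    cast_sum _ _ (hu3a p i), cast_sum _ _ (hu3b p i), cast_sum _ _ (hu3c p i),
    cast_sum _ _ (hu3d p i)]
  show _ = (α - β - γ + δ) * ((u3Q p i : ℤ) : ℝ)
  push_cast
  ring

lemma orth3R : ∀ p q, ∑ j, u3R p j * u3R q j = if p = q then N3 p else 0 := by
  intro p q
  have e : ∀ j, u3R p j * u3R q j = ((u3Q p j * u3Q q j : ℤ) : ℝ) := by
    intro j; push_cast [u3R]; ring
  rw [Finset.sum_congr rfl fun j _ => e j, cast_sum _ _ (hu3orth p q)]
  by_cases hpq : p = q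
  · subst hpq
    rw [if_pos rfl, if_pos rfl]
    fin_cases p <;> norm_num [N3]
  · rw [if_neg hpq, if_neg hpq]; norm_num

lemma eigX (α β γ δ t : ℝ) (ht : t * t = 5) (k : Fin 2) (i : Fin 12) :
    ∑ j, Gtab α β γ δ i j * (((x0 k j : ℤ):ℝ) + t * ((x1 k j : ℤ):ℝ))
      = (α + t*β - t*γ - δ) * (((x0 k i : ℤ):ℝ) + t * ((x1 k i : ℤ):ℝ)) := by
  have e : ∀ j, Gtab α β γ δ i j * (((x0 k j : ℤ):ℝ) + t * ((x1 k j : ℤ):ℝ))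
      = α * ((ind 0 i j * x0 k j : ℤ):ℝ) + β * ((ind 1 i j * x0 k j : ℤ):ℝ)
        + γ * ((ind 2 i j * x0 k j : ℤ):ℝ) + δ * ((ind 3 i j * x0 k j : ℤ):ℝ)
        + ((t*α) * ((ind 0 i j * x1 k j : ℤ):ℝ) + (t*β) * ((ind 1 i j * x1 k j : ℤ):ℝ)
        + (t*γ) * ((ind 2 i j * x1 k j : ℤ):ℝ) + (t*δ) * ((ind 3 i j * x1 k j : ℤ):ℝ)) := by
    intro j; rw [Gtab_pt]; push_cast; ring
  rw [Finset.sum_congr rfl fun j _ => e j]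
  rw [Finset.sum_add_distrib, Finset.sum_add_distrib, Finset.sum_add_distrib,
    Finset.sum_add_distrib, Finset.sum_add_distrib, Finset.sum_add_distrib,
    Finset.sum_add_distrib]
  rw [← Finset.mul_sum, ← Finset.mul_sum, ← Finset.mul_sum, ← Finset.mul_sum,
    ← Finset.mul_sum, ← Finset.mul_sum, ← Finset.mul_sum, ← Finset.mul_sum]
  rw [cast_sum _ _ (hxa0 k i), cast_sum _ _ (hxb0 k i), cast_sum _ _ (hxc0 k i),
    cast_sum _ _ (hxd0 k i), cast_sum _ _ (hxa1 k i), cast_sum _ _ (hxb1 k i),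
    cast_sum _ _ (hxc1 k i), cast_sum _ _ (hxd1 k i)]
  push_cast
  linear_combination (-(β - γ) * ((x1 k i : ℤ):ℝ)) * ht

lemma eigU (α β γ δ : ℝ) (p : Fin 4) (i : Fin 12) :
    ∑ j, Gtab α β γ δ i j * UU p j = lamU α β γ δ p * UU p i := by
  have hee : eps p * eps p = 1 := by fin_cases p <;> norm_num [eps]
  have ht : (eps p * s5) * (eps p * s5) = 5 := by
    calc (eps p * s5) * (eps p * s5) = (eps p * eps p) * (s5 * s5) := by ring
      _ = 5 := by rw [hee, s5_sq]; norm_num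
  exact eigX α β γ δ (eps p * s5) ht (bas p) i

lemma dotX (ea eb : ℝ) (ka kb : Fin 2) :
    ∑ j, (((x0 ka j:ℤ):ℝ) + ea * s5 * ((x1 ka j:ℤ):ℝ))
        * (((x0 kb j:ℤ):ℝ) + eb * s5 * ((x1 kb j:ℤ):ℝ))
      = ((if ka = kb then (20:ℤ) else 0 : ℤ):ℝ)
        + (ea + eb) * s5 * ((if ka = kb then (4:ℤ) else 0 : ℤ):ℝ)
        + (ea * eb) * (s5 * s5) * ((if ka = kb then (4:ℤ) else 0 : ℤ):ℝ) := by
  have e : ∀ j, (((x0 ka j:ℤ):ℝ) + ea * s5 * ((x1 ka j:ℤ):ℝ))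
        * (((x0 kb j:ℤ):ℝ) + eb * s5 * ((x1 kb j:ℤ):ℝ))
      = ((x0 ka j * x0 kb j : ℤ):ℝ) + (eb * s5) * ((x0 ka j * x1 kb j : ℤ):ℝ)
        + ((ea * s5) * ((x1 ka j * x0 kb j : ℤ):ℝ)
        + ((ea * eb) * (s5 * s5)) * ((x1 ka j * x1 kb j : ℤ):ℝ)) := by
    intro j; push_cast; ring
  rw [Finset.sum_congr rfl fun j _ => e j, Finset.sum_add_distrib, Finset.sum_add_distrib,
    Finset.sum_add_distrib, ← Finset.mul_sum, ← Finset.mul_sum, ← Finset.mul_sum,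
    cast_sum _ _ (hd00 ka kb), cast_sum _ _ (hd01 ka kb), cast_sum _ _ (hd10 ka kb),
    cast_sum _ _ (hd11 ka kb)]
  ring

lemma orthU : ∀ p q, ∑ j, UU p j * UU q j = if p = q then NU p else 0 := by
  intro p q
  have h2 : ∑ j, UU p j * UU q j
      = ((if bas p = bas q then (20:ℤ) else 0 : ℤ):ℝ)
        + (eps p + eps q) * s5 * ((if bas p = bas q then (4:ℤ) else 0 : ℤ):ℝ)
        + (eps p * eps q) * (s5 * s5) * ((if bas p = bas q then (4:ℤ) else 0 : ℤ):ℝ) :=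
    dotX (eps p) (eps q) (bas p) (bas q)
  rw [h2]
  fin_cases p <;> fin_cases q <;>
    norm_num [eps, bas, NU, Fin.ext_iff] <;>
    first
      | ring1
      | linear_combination (4:ℝ) * s5_sq
      | linear_combination ((-4):ℝ) * s5_sq

lemma N3_pos : ∀ p, 0 < N3 p := by
  intro p; fin_cases p <;> norm_num [N3]

lemma NU_pos : ∀ p, 0 < NU p := by
  intro p; fin_cases p <;> (norm_num [NU, eps]; nlinarith [s5_nonneg, s5_lt])

lemma conj_one (X : Matrix (Fin 12) (Fin 12) ℝ) : conj 1 X = X := by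
  ext i j; rw [conj_apply]; rfl

def Gplus : Matrix (Fin 12) (Fin 12) ℝ :=
  Gtab ((5 + s5)/8) ((1 + s5)/8) (-((1 + s5)/8)) (-((5 + s5)/8))
def Gminus : Matrix (Fin 12) (Fin 12) ℝ :=
  Gtab ((5 + -s5)/8) ((1 + -s5)/8) (-((1 + -s5)/8)) (-((5 + -s5)/8))

lemma neg_s5_sq : (-s5) * (-s5) = 5 := by rw [neg_mul_neg]; exact s5_sq

lemma isGram_plus : IsGram Gplus := isGram_gen s5 s5_sq
lemma isGram_minus : IsGram Gminus := isGram_gen (-s5) neg_s5_sq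

lemma completeness (G : Matrix (Fin 12) (Fin 12) ℝ) (hG : IsGram G)
    (haut : aut G = (A : Set (Equiv.Perm (Fin 12)))) : G = Gplus ∨ G = Gminus := by
  obtain ⟨M, ⟨hinj, hsum, hedge⟩, rfl⟩ := hG
  have hstab : ∀ g ∈ A, ∀ x y, gram M (g x) (g y) = gram M x y := by
    intro g hg x y
    have hmem : g ∈ aut (gram M) := by rw [haut]; exact hg
    calc gram M (g x) (g y) = conj g (gram M) x y := (conj_apply g (gram M) x y).symm
      _ = gram M x y := by rw [hmem.2]
  have hval : ∀ x y, gram M x y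
      = wv (gram M 0 0) (gram M 0 1) (gram M 0 6) (gram M 0 11) (cls x y) := by
    intro x y
    obtain ⟨g, hg, h0, h1⟩ := exists_word x y
    have h := hstab g hg 0 (rep (cls x y))
    rw [h0, h1] at h
    rw [h]
    rcases fin4_cases (cls x y) with h'|h'|h'|h' <;> rw [h'] <;> rfl
  have hGt : gram M = Gtab (gram M 0 0) (gram M 0 1) (gram M 0 6) (gram M 0 11) := by
    ext x y; rw [hval x y]; rfl
  -- edge equation
  have hed := hedge 0 1 isEdge_01
  have hsq : ‖col M 0 - col M 1‖^2 = 1 := by rw [hed]; norm_num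
  rw [dist_sq] at hsq
  have h11 : gram M 1 1 = gram M 0 0 := by rw [hval 1 1]; rfl
  have heq1 : 2 * gram M 0 0 - 2 * gram M 0 1 = 1 := by rw [h11] at hsq; linarith
  -- row sum equation
  have hrs := rowsum M hsum 0
  have heq2 : gram M 0 0 + 5 * gram M 0 1 + 5 * gram M 0 6 + gram M 0 11 = 0 := by
    have e : ∀ j, gram M 0 j
        = gram M 0 0 * ((ind 0 0 j : ℤ):ℝ) + gram M 0 1 * ((ind 1 0 j : ℤ):ℝ)
          + gram M 0 6 * ((ind 2 0 j : ℤ):ℝ) + gram M 0 11 * ((ind 3 0 j : ℤ):ℝ) := by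
      intro j
      rw [hval 0 j]
      exact Gtab_pt _ _ _ _ 0 j
    rw [Finset.sum_congr rfl fun j _ => e j, Finset.sum_add_distrib, Finset.sum_add_distrib,
      Finset.sum_add_distrib, ← Finset.mul_sum, ← Finset.mul_sum, ← Finset.mul_sum,
      ← Finset.mul_sum, cast_sum _ _ (hcnt 0), cast_sum _ _ (hcnt 1), cast_sum _ _ (hcnt 2),
      cast_sum _ _ (hcnt 3)] at hrs
    norm_num [Matrix.cons_val_two, Matrix.vecHead, Matrix.vecTail, vec4_three] at hrs
    linarith [hrs]
  -- lam3 = 0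
  have heig3 : ∀ p i, ∑ j, gram M i j * u3R p j
      = (gram M 0 0 - gram M 0 1 - gram M 0 6 + gram M 0 11) * u3R p i := by
    intro p i
    have h := eig3 (gram M 0 0) (gram M 0 1) (gram M 0 6) (gram M 0 11) p i
    rw [← hGt] at h
    exact h
  obtain ⟨cc, ⟨p0, hp0⟩, hs3⟩ :=
    key M u3R (fun _ => gram M 0 0 - gram M 0 1 - gram M 0 6 + gram M 0 11) N3 heig3 orth3R
  have hl3 : gram M 0 0 - gram M 0 1 - gram M 0 6 + gram M 0 11 = 0 := by
    have hfac : (gram M 0 0 - gram M 0 1 - gram M 0 6 + gram M 0 11) * (∑ p, cc p^2 * N3 p) = 0 := by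
      rw [Finset.mul_sum, ← hs3]
      exact Finset.sum_congr rfl fun p _ => by ring
    have hpos : 0 < ∑ p, cc p^2 * N3 p := by
      refine Finset.sum_pos' (fun p _ => mul_nonneg (sq_nonneg _) (N3_pos p).le)
        ⟨p0, Finset.mem_univ _, ?_⟩
      have h2 : 0 < cc p0 ^ 2 := pow_pos (abs_pos.mpr hp0) 2 |>.trans_eq (by rw [sq_abs])
      exact mul_pos h2 (N3_pos p0)
    exact (mul_eq_zero.mp hfac).resolve_right hpos.ne'
  -- lamU facts
  have heigU : ∀ p i, ∑ j, gram M i j * UU p j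
      = lamU (gram M 0 0) (gram M 0 1) (gram M 0 6) (gram M 0 11) p * UU p i := by
    intro p i
    have h := eigU (gram M 0 0) (gram M 0 1) (gram M 0 6) (gram M 0 11) p i
    rw [← hGt] at h
    exact h
  have hnormU : ∀ p, ∑ j, UU p j * UU p j = NU p := by
    intro p
    have h := orthU p p
    rw [if_pos rfl] at h
    exact h
  have hlam_nn : ∀ p, 0 ≤ lamU (gram M 0 0) (gram M 0 1) (gram M 0 6) (gram M 0 11) p := by
    intro p
    have h := lam_nonneg M (UU p) _ (NU p) (fun i => heigU p i) (hnormU p)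
    by_contra hlt
    push_neg at hlt
    have : lamU (gram M 0 0) (gram M 0 1) (gram M 0 6) (gram M 0 11) p * NU p < 0 :=
      mul_neg_of_neg_of_pos hlt (NU_pos p)
    linarith
  obtain ⟨dd, ⟨q0, hq0'⟩, hsU⟩ :=
    key M UU (lamU (gram M 0 0) (gram M 0 1) (gram M 0 6) (gram M 0 11)) NU heigU orthU
  have hdisj : lamU (gram M 0 0) (gram M 0 1) (gram M 0 6) (gram M 0 11) 0 = 0
      ∨ lamU (gram M 0 0) (gram M 0 1) (gram M 0 6) (gram M 0 11) 2 = 0 := by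
    by_contra hcon
    push_neg at hcon
    have hl0' : 0 < lamU (gram M 0 0) (gram M 0 1) (gram M 0 6) (gram M 0 11) 0 :=
      (hlam_nn 0).lt_of_ne (Ne.symm hcon.1)
    have hl2' : 0 < lamU (gram M 0 0) (gram M 0 1) (gram M 0 6) (gram M 0 11) 2 :=
      (hlam_nn 2).lt_of_ne (Ne.symm hcon.2)
    have hlpos : ∀ p, 0 < lamU (gram M 0 0) (gram M 0 1) (gram M 0 6) (gram M 0 11) p := by
      intro p
      fin_cases p
      · exact hl0'
      · exact hl0'
      · exact hl2'
      · exact hl2'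
    have hterm : ∀ p ∈ Finset.univ, 0 ≤ dd p^2
        * (lamU (gram M 0 0) (gram M 0 1) (gram M 0 6) (gram M 0 11) p * NU p) :=
      fun p _ => mul_nonneg (sq_nonneg _) (mul_nonneg (hlpos p).le (NU_pos p).le)
    have hz := (Finset.sum_eq_zero_iff_of_nonneg hterm).mp hsU q0 (Finset.mem_univ _)
    have hpos2 : 0 < lamU (gram M 0 0) (gram M 0 1) (gram M 0 6) (gram M 0 11) q0 * NU q0 :=
      mul_pos (hlpos q0) (NU_pos q0)
    have hdd : dd q0 ^ 2 = 0 := by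
      rcases mul_eq_zero.mp hz with h | h
      · exact h
      · exact absurd h hpos2.ne'
    exact hq0' (by
      have := pow_eq_zero_iff (n := 2) (by norm_num) |>.mp hdd
      exact this)
  have hL0 : lamU (gram M 0 0) (gram M 0 1) (gram M 0 6) (gram M 0 11) 0
      = gram M 0 0 + s5 * gram M 0 1 - s5 * gram M 0 6 - gram M 0 11 := by
    show gram M 0 0 + (eps 0 * s5) * gram M 0 1 - (eps 0 * s5) * gram M 0 6 - gram M 0 11 = _
    norm_num [eps]
  have hL2 : lamU (gram M 0 0) (gram M 0 1) (gram M 0 6) (gram M 0 11) 2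
      = gram M 0 0 - s5 * gram M 0 1 + s5 * gram M 0 6 - gram M 0 11 := by
    show gram M 0 0 + (eps 2 * s5) * gram M 0 1 - (eps 2 * s5) * gram M 0 6 - gram M 0 11 = _
    norm_num [eps, Matrix.cons_val_two, Matrix.vecHead, Matrix.vecTail, vec4_three]
    ring
  have hg6 : gram M 0 6 + gram M 0 1 = 0 := by linarith
  have hg11 : gram M 0 11 + gram M 0 0 = 0 := by linarith
  rcases hdisj with h | h
  · -- lamU 0 = 0 : great icosahedron, G = Gminus
    rw [hL0] at h
    have hab : gram M 0 0 + s5 * gram M 0 1 = 0 := by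
      linear_combination (1/2 : ℝ) * h + (s5/2) * hg6 + (1/2 : ℝ) * hg11
    have hb' : -2*s5*(gram M 0 1) - 2*(gram M 0 1) = 1 := by
      linear_combination heq1 - 2 * hab
    have hbv : gram M 0 1 = (1 + -s5)/8 := by
      linear_combination ((1-s5)/8) * hb' - ((gram M 0 1)/4) * s5_sq
    have hav : gram M 0 0 = (5 + -s5)/8 := by
      linear_combination hab + (-s5) * hbv + ((1/8) : ℝ) * s5_sq
    have hcv : gram M 0 6 = -((1 + -s5)/8) := by linear_combination hg6 - hbv
    have hdv : gram M 0 11 = -((5 + -s5)/8) := by linear_combination hg11 - hav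
    right
    rw [hGt, hav, hbv, hcv, hdv]
    rfl
  · -- lamU 2 = 0 : regular icosahedron, G = Gplus
    rw [hL2] at h
    have hab : gram M 0 0 - s5 * gram M 0 1 = 0 := by
      linear_combination (1/2 : ℝ) * h + (-(s5/2)) * hg6 + (1/2 : ℝ) * hg11
    have hb' : 2*s5*(gram M 0 1) - 2*(gram M 0 1) = 1 := by
      linear_combination heq1 + 2 * hab - 4 * hab
    have hbv : gram M 0 1 = (1 + s5)/8 := by
      linear_combination ((1+s5)/8) * hb' - ((gram M 0 1)/4) * s5_sq
    have hav : gram M 0 0 = (5 + s5)/8 := by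
      linear_combination hab + s5 * hbv + ((1/8) : ℝ) * s5_sq
    have hcv : gram M 0 6 = -((1 + s5)/8) := by linear_combination hg6 - hbv
    have hdv : gram M 0 11 = -((5 + s5)/8) := by linear_combination hg11 - hav
    left
    rw [hGt, hav, hbv, hcv, hdv]
    rfl

lemma not_equiv_PM : ¬ GramEquiv Gplus Gminus := by
  rintro ⟨g, hg, hEq⟩
  have hstab : conj g Gplus = Gplus := by
    have hmem : g ∈ aut Gplus := by
      have haf : aut Gplus = (A : Set (Equiv.Perm (Fin 12))) := aut_full _ _ _ _
      rw [haf]; exact hg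
    exact hmem.2
  rw [hstab] at hEq
  have h01 := congrFun (congrFun hEq 0) 1
  have h : ((1 + -s5)/8 : ℝ) = (1 + s5)/8 := h01
  nlinarith [s5_pos, h]

lemma not_equiv_MP : ¬ GramEquiv Gminus Gplus := by
  rintro ⟨g, hg, hEq⟩
  have hstab : conj g Gminus = Gminus := by
    have hmem : g ∈ aut Gminus := by
      have haf : aut Gminus = (A : Set (Equiv.Perm (Fin 12))) := aut_full _ _ _ _
      rw [haf]; exact hg
    exact hmem.2
  rw [hstab] at hEq
  have h01 := congrFun (congrFun hEq 0) 1
  have h : ((1 + s5)/8 : ℝ) = (1 + -s5)/8 := h01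
  nlinarith [s5_pos, h]


/-- Up to equivalence there are exactly 2 Gram matrices of icosahedra whose
automorphism group is all of `A`. -/
theorem count_fully_symmetric_icosahedra :
    ∃ Gs : Fin 2 → Matrix (Fin 12) (Fin 12) ℝ,
      (∀ i, IsGram (Gs i) ∧ aut (Gs i) = (A : Set (Equiv.Perm (Fin 12)))) ∧
      (∀ i j, i ≠ j → ¬ GramEquiv (Gs i) (Gs j)) ∧
      (∀ G, IsGram G → aut G = (A : Set (Equiv.Perm (Fin 12))) →
        ∃ i, GramEquiv (Gs i) G) := by
  refine ⟨![Gplus, Gminus], ?_, ?_, ?_⟩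
  · intro i
    fin_cases i
    · exact ⟨isGram_plus, aut_full _ _ _ _⟩
    · exact ⟨isGram_minus, aut_full _ _ _ _⟩
  · intro i j hij
    fin_cases i <;> fin_cases j
    · exact absurd rfl hij
    · exact not_equiv_PM
    · exact not_equiv_MP
    · exact absurd rfl hij
  · intro G hG haut
    rcases completeness G hG haut with h | h
    · exact ⟨0, 1, one_mem A, by rw [conj_one]; exact h⟩
    · exact ⟨1, 1, one_mem A, by rw [conj_one]; exact h⟩

end Ico
end
end

section
/- There is no icosahedron M satisfying D·M = M·π(a), where D = diag(−1,1,1). -/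
open Matrix

noncomputable section

namespace Ico

set_option maxRecDepth 40000 in
lemma aux : (a*b*c*a*c) 0 = 0 ∧ (a*b*c*a*c) 1 = 2 ∧ (c*a*c*b) 0 = 3 ∧ (c*a*c*b) 1 = 0
    ∧ a 0 = 1 ∧ a 2 = 3 := by decide

lemma haA : a ∈ A := Subgroup.subset_closure (by simp)
lemma hbA : b ∈ A := Subgroup.subset_closure (by simp)
lemma hcA : c ∈ A := Subgroup.subset_closure (by simp)

lemma edge02 : IsEdge 0 2 :=
  ⟨a * b * c * a * c,
    mul_mem (mul_mem (mul_mem (mul_mem haA hbA) hcA) haA) hcA,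
    by rw [aux.1, aux.2.1]⟩

lemma edge03 : IsEdge 0 3 :=
  ⟨c * a * c * b,
    mul_mem (mul_mem (mul_mem hcA haA) hcA) hbA,
    by rw [aux.2.2.1, aux.2.2.2.1]; decide⟩

lemma norm_sq_eq (M : Matrix (Fin 3) (Fin 12) ℝ) (i j : Fin 12)
    (h : ‖col M i - col M j‖ = 1) :
    (M 0 i - M 0 j)^2 + (M 1 i - M 1 j)^2 + (M 2 i - M 2 j)^2 = 1 := by
  have h2 : ‖col M i - col M j‖ ^ 2 = 1 := by rw [h]; norm_num
  rw [EuclideanSpace.norm_eq, Real.sq_sqrt (by positivity)] at h2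
  simpa [Fin.sum_univ_three, col, Real.norm_eq_abs, sq_abs] using h2

/-- There is no icosahedron with `diag(-1,1,1)·M = M·π(a)`. -/
theorem no_icosahedron_a_diag_neg_one_one :
    ¬ ∃ M : Matrix (Fin 3) (Fin 12) ℝ,
        IsIcosahedron M ∧
          Matrix.diagonal ![(-1 : ℝ), 1, 1] * M = M * permMat a := by
  rintro ⟨M, ⟨hinj, -, hedge⟩, hM⟩
  have hrel : ∀ k i, (![(-1 : ℝ), 1, 1] k) * M k i = M k (a i) := by
    intro k i
    have h := congrFun (congrFun hM k) i
    rw [Matrix.diagonal_mul, Matrix.mul_apply] at h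
    rw [h]
    simp [permMat, mul_ite, Finset.sum_ite_eq']
  have h01 : ∀ k, (![(-1 : ℝ), 1, 1] k) * M k 0 = M k 1 := fun k => by
    have := hrel k 0; rwa [aux.2.2.2.2.1] at this
  have h23 : ∀ k, (![(-1 : ℝ), 1, 1] k) * M k 2 = M k 3 := fun k => by
    have := hrel k 2; rwa [aux.2.2.2.2.2] at this
  have e1 := norm_sq_eq M 0 2 (hedge 0 2 edge02)
  have e2 := norm_sq_eq M 0 3 (hedge 0 3 edge03)
  have g0 := h23 0; have g1 := h23 1; have g2 := h23 2
  simp [Matrix.cons_val_zero, Matrix.cons_val_one] at g0 g1 g2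
  rw [← g0, ← g1, ← g2] at e2
  have key : M 0 0 * M 0 2 = 0 := by nlinarith [e1, e2]
  have f0 := h01 0; have f1 := h01 1; have f2 := h01 2
  simp at f0 f1 f2
  rcases mul_eq_zero.mp key with h0 | h0
  · have : col M 0 = col M 1 := by
      ext k
      fin_cases k
      · show M 0 0 = M 0 1; rw [← f0, h0]; ring
      · show M 1 0 = M 1 1; exact f1
      · show M 2 0 = M 2 1; exact f2
    exact absurd (hinj this) (by decide)
  · have : col M 2 = col M 3 := by
      ext k
      fin_cases k
      · show M 0 2 = M 0 3; rw [← g0, h0]; ring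
      · show M 1 2 = M 1 3; exact g1
      · show M 2 2 = M 2 3; exact g2
    exact absurd (hinj this) (by decide)

end Ico
end
end

section
/- Let M be an icosahedron with columns V₁,…,V₁₂, let i ∈ {1,…,12}, and suppose that all five neighbours of i (i.e. all V_j with {i,j} ∈ E) lie in an affine plane H ⊆ ℝ³ (an affine subspace of dimension 2). Let W be the 3×12 matrix with columns W_j = V_j for j ≠ i and W_i = the orthogonal reflection of V_i across H. Then ‖W_j − W_k‖ = 1 for every {j,k} ∈ E; consequently, if the columns of W are pairwise distinct, then subtracting from each column the centroid (W₁+⋯+W₁₂)/12 yields an icosahedron (the icosahedron obtained by denting at vertex i). -/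
open Matrix

noncomputable section

namespace Ico

/-- Denting an icosahedron at a vertex `i` whose five neighbours lie in an affine
plane `H`: reflecting `V_i` across `H` keeps all edge lengths equal to 1, and if
the new vertices are pairwise distinct then re-centering at the centroid again
yields an icosahedron. -/
theorem denting (M : Matrix (Fin 3) (Fin 12) ℝ) (hM : IsIcosahedron M) (i : Fin 12)
    (H : AffineSubspace ℝ (EuclideanSpace ℝ (Fin 3))) [Nonempty H]
    [Submodule.HasOrthogonalProjection H.direction]
    (hdim : Module.finrank ℝ H.direction = 2)
    (hnb : ∀ j, IsEdge i j → col M j ∈ H) :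
    ∀ W : Fin 12 → EuclideanSpace ℝ (Fin 3),
      (W = fun j =>
        if j = i then EuclideanGeometry.reflection H (col M i) else col M j) →
      (∀ j k, IsEdge j k → ‖W j - W k‖ = 1) ∧
      (Function.Injective W →
        IsIcosahedron (Matrix.of fun r j =>
          (W j - (12 : ℝ)⁻¹ • ∑ l, W l) r)) := by
  intro W hW
  have hsymm : ∀ j k : Fin 12, IsEdge j k → IsEdge k j := by
    rintro j k ⟨g, hg, h⟩
    exact ⟨g, hg, by rw [h, Finset.pair_comm]⟩
  have hii : ¬ IsEdge i i := by
    intro h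
    have := hM.2.2 i i h
    simp at this
  have hrefl : ∀ j, IsEdge i j →
      ‖EuclideanGeometry.reflection H (col M i) - col M j‖ = 1 := by
    intro j hj
    have hm := hnb j hj
    have h1 : dist (col M j) (EuclideanGeometry.reflection H (col M i))
        = dist (col M j) (col M i) :=
      EuclideanGeometry.dist_reflection_eq_of_mem H hm (col M i)
    rw [← dist_eq_norm, dist_comm, h1, dist_comm, dist_eq_norm]
    exact hM.2.2 i j hj
  have hedge : ∀ j k, IsEdge j k → ‖W j - W k‖ = 1 := by
    intro j k hjk
    subst hW
    by_cases hj : j = i <;> by_cases hk : k = i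
    · subst hj; subst hk; exact absurd hjk hii
    · subst hj; simp only [if_pos rfl, if_neg hk]; exact hrefl k hjk
    · subst hk; simp only [if_pos rfl, if_neg hj]
      rw [norm_sub_rev]; exact hrefl j (hsymm _ _ hjk)
    · simp only [if_neg hj, if_neg hk]; exact hM.2.2 j k hjk
  refine ⟨hedge, fun hinj => ?_⟩
  set cen := (12 : ℝ)⁻¹ • ∑ l, W l with hcen
  have hcol : ∀ j, col (Matrix.of fun r j => (W j - cen) r) j = W j - cen :=
    fun j => rfl
  refine ⟨?_, ?_, ?_⟩
  · intro j k h
    rw [hcol, hcol] at h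
    exact hinj (by linear_combination (norm := module) h)
  · have : (∑ j, col (Matrix.of fun r j => (W j - cen) r) j)
        = (∑ j, W j) - (12 : ℕ) • cen := by
      simp only [hcol, Finset.sum_sub_distrib, Finset.sum_const, Finset.card_univ,
        Fintype.card_fin]
    rw [this, hcen]
    module
  · intro j k hjk
    rw [hcol, hcol, sub_sub_sub_cancel_right]
    exact hedge j k hjk

end Ico
end
end
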